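/- In any proper edge coloring of H_4 with 4 colors distinguishing all vertices by palettes, for each dimension i and each color c, exactly two edges of dimension i have color c. -/

import Mathlib

/-- Flip coordinate `i` of a hypercube vertex: the other endpoint of the
dimension-`i` edge at `x`. -/
def flipCoord {n : ℕ} (x : Fin n → Bool) (i : Fin n) : Fin n → Bool :=
  Function.update x i (!(x i))

/-- `f` assigns a color to each (vertex, dimension) pair; it is an edge coloring
iff both endpoints of every edge get the same value, so `f x i` is the color of
the dimension-`i` edge `e_i(x)` at `x`. -/
def IsEdgeColoring {n : ℕ} {C : Type*} (f : (Fin n → Bool) → Fin n → C) : Prop :=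
  ∀ (x : Fin n → Bool) (i : Fin n), f x i = f (flipCoord x i) i

/-- A proper edge coloring: edges sharing a vertex receive distinct colors. -/
def IsProper {n : ℕ} {C : Type*} (f : (Fin n → Bool) → Fin n → C) : Prop :=
  ∀ x : Fin n → Bool, Function.Injective (f x)

/-- The palette of `x` is the sequence `(f x 1, …, f x n)`, i.e. the function
`f x`; the coloring distinguishes all vertices iff palettes are pairwise
distinct. -/
def Distinguishes {n : ℕ} {C : Type*} (f : (Fin n → Bool) → Fin n → C) : Prop :=
  ∀ x y : Fin n → Bool, (∀ i, f x i = f y i) → x = y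

lemma flipCoord_self {n : ℕ} (x : Fin n → Bool) (i : Fin n) :
    flipCoord x i i = !(x i) := by
  simp [flipCoord]

lemma flipCoord_other {n : ℕ} (x : Fin n → Bool) {i j : Fin n} (h : j ≠ i) :
    flipCoord x i j = x j := by
  simp [flipCoord, Function.update_of_ne h]

lemma flipCoord_flipCoord {n : ℕ} (x : Fin n → Bool) (i : Fin n) :
    flipCoord (flipCoord x i) i = x := by
  funext j
  by_cases h : j = i
  · subst h; simp [flipCoord]
  · rw [flipCoord_other _ h, flipCoord_other _ h]

lemma flipCoord_ne {n : ℕ} (x : Fin n → Bool) (i : Fin n) :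
    flipCoord x i ≠ x := by
  intro h
  have := congrFun h i
  rw [flipCoord_self] at this
  exact (Bool.not_ne_self (x i)) this

/-- A finset with a fixed-point-free involution has even cardinality. -/
lemma even_card_of_involution {α : Type*} [Fintype α] [DecidableEq α]
    (s : Finset α) (g : α → α)
    (hmem : ∀ x ∈ s, g x ∈ s) (hgg : ∀ x ∈ s, g (g x) = x)
    (hne : ∀ x ∈ s, g x ≠ x) : Even s.card := by
  classical
  let e := Fintype.equivFin α
  set s1 := s.filter (fun x => e x < e (g x)) with hs1
  set s2 := s.filter (fun x => e (g x) < e x) with hs2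
  have hdisj : Disjoint s1 s2 := by
    rw [Finset.disjoint_left]
    intro x hx1 hx2
    rw [hs1, Finset.mem_filter] at hx1
    rw [hs2, Finset.mem_filter] at hx2
    exact absurd (hx1.2.trans hx2.2) (lt_irrefl _)
  have hunion : s1 ∪ s2 = s := by
    apply Finset.Subset.antisymm
    · intro x hx
      rcases Finset.mem_union.mp hx with h | h
      · exact (Finset.mem_filter.mp h).1
      · exact (Finset.mem_filter.mp h).1
    · intro x hx
      have hne' : e x ≠ e (g x) := fun h => hne x hx (e.injective h.symm)
      rcases lt_or_gt_of_ne hne' with h | h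
      · exact Finset.mem_union_left _ (Finset.mem_filter.mpr ⟨hx, h⟩)
      · exact Finset.mem_union_right _ (Finset.mem_filter.mpr ⟨hx, h⟩)
  have himg : s2 = s1.image g := by
    ext y
    constructor
    · intro hy
      rw [hs2, Finset.mem_filter] at hy
      refine Finset.mem_image.mpr ⟨g y, ?_, hgg y hy.1⟩
      rw [hs1, Finset.mem_filter]
      refine ⟨hmem y hy.1, ?_⟩
      rw [hgg y hy.1]
      exact hy.2
    · intro hy
      rcases Finset.mem_image.mp hy with ⟨x, hx, rfl⟩
      rw [hs1, Finset.mem_filter] at hx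
      rw [hs2, Finset.mem_filter]
      refine ⟨hmem x hx.1, ?_⟩
      rw [hgg x hx.1]
      exact hx.2
  have hcard2 : s2.card = s1.card := by
    rw [himg]
    apply Finset.card_image_of_injOn
    intro a ha b hb hab
    have ha' := (Finset.mem_filter.mp ha).1
    have hb' := (Finset.mem_filter.mp hb).1
    rw [← hgg a ha', ← hgg b hb', hab]
  have hcard : s.card = s1.card + s2.card := by
    rw [← hunion, Finset.card_union_of_disjoint hdisj]
  rw [hcard, hcard2]
  exact ⟨s1.card, rfl⟩

/-- Dimension-`i` edges are in bijection with vertices `x` having `x i = false`. -/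
theorem H4_exactly_two_edges_per_dim_per_color
    (f : (Fin 4 → Bool) → Fin 4 → Fin 4)
    (he : IsEdgeColoring f) (hp : IsProper f) (hd : Distinguishes f) :
    ∀ (i : Fin 4) (c : Fin 4),
      (Finset.univ.filter
        (fun x : Fin 4 → Bool => x i = false ∧ f x i = c)).card = 2 := by
  classical
  -- the half-cube has 8 vertices
  have hHcard : ∀ i : Fin 4,
      (Finset.univ.filter (fun x : Fin 4 → Bool => x i = false)).card = 8 := by decide
  -- count of injective palettes with a prescribed value
  have hTcard : ∀ (i c : Fin 4),
      ((Finset.univ : Finset (Fin 4 → Fin 4)).filter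
        (fun g => Function.Injective g ∧ g i = c)).card = 6 := by decide
  -- abbreviation for the fiber counts
  set a : Fin 4 → Fin 4 → ℕ := fun i c =>
    (Finset.univ.filter
      (fun x : Fin 4 → Bool => x i = false ∧ f x i = c)).card with ha
  clear_value a
  -- Step 1 : each `a i c` is even
  have heven : ∀ i c, Even (a i c) := by
    intro i c
    simp only [ha]
    -- complement within the half-cube
    set B := Finset.univ.filter
      (fun x : Fin 4 → Bool => x i = false ∧ ¬ f x i = c) with hB
    clear_value B
    have hsurj : ∀ x : Fin 4 → Bool, ∃ j, f x j = c := fun x =>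
      (Finite.injective_iff_surjective.mp (hp x)) c
    set j : (Fin 4 → Bool) → Fin 4 := fun x => (hsurj x).choose with hjdef
    have hj : ∀ x, f x (j x) = c := fun x => (hsurj x).choose_spec
    set g : (Fin 4 → Bool) → (Fin 4 → Bool) := fun x => flipCoord x (j x) with hgdef
    have hjx_ne : ∀ x ∈ B, j x ≠ i := by
      intro x hx hji
      rw [hB] at hx
      have hx' := (Finset.mem_filter.mp hx).2
      exact hx'.2 (hji ▸ hj x)
    have hfg : ∀ x, f (g x) (j x) = c := by
      intro x
      show f (flipCoord x (j x)) (j x) = c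
      rw [← he x (j x)]
      exact hj x
    have hjg : ∀ x, j (g x) = j x := by
      intro x
      apply hp (g x)
      rw [hj (g x), hfg x]
    have hmem : ∀ x ∈ B, g x ∈ B := by
      intro x hx
      obtain ⟨-, hxf, hxc⟩ : x ∈ Finset.univ ∧ x i = false ∧ ¬ f x i = c :=
        by simpa [hB] using hx
      rw [hB, Finset.mem_filter]
      refine ⟨Finset.mem_univ _, ?_, ?_⟩
      · show flipCoord x (j x) i = false
        rw [flipCoord_other x (Ne.symm (hjx_ne x hx))]
        exact hxf
      · intro hgc
        have : i = j x := hp (g x) (hgc.trans (hfg x).symm)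
        exact hjx_ne x hx this.symm
    have hgg : ∀ x ∈ B, g (g x) = x := by
      intro x _
      show flipCoord (g x) (j (g x)) = x
      rw [hjg x]
      exact flipCoord_flipCoord x (j x)
    have hne : ∀ x ∈ B, g x ≠ x := fun x _ => flipCoord_ne x (j x)
    have hBeven : Even B.card := even_card_of_involution B g hmem hgg hne
    -- a i c + B.card = 8
    have hsplit : (Finset.univ.filter
        (fun x : Fin 4 → Bool => x i = false ∧ f x i = c)).card + B.card = 8 := by
      rw [hB]
      have h := Finset.card_filter_add_card_filter_not
        (s := Finset.univ.filter (fun x : Fin 4 → Bool => x i = false))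
        (p := fun x => f x i = c)
      rw [Finset.filter_filter, Finset.filter_filter, hHcard i] at h
      exact h
    obtain ⟨k, hk⟩ := hBeven
    refine ⟨(8 - (k + k)) / 2, ?_⟩
    rw [hk] at hsplit
    generalize (Finset.univ.filter
      (fun x : Fin 4 → Bool => x i = false ∧ f x i = c)).card = m at hsplit ⊢
    omega
  -- Step 2 : each `a i c ≤ 3`
  have hle3 : ∀ i c, a i c ≤ 3 := by
    intro i c
    simp only [ha]
    -- all vertices with color c in dimension i
    set S := Finset.univ.filter (fun x : Fin 4 → Bool => f x i = c) with hS
    clear_value S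
    -- S injects into injective palettes mapping i to c
    have hScard : S.card ≤ 6 := by
      rw [← hTcard i c]
      apply Finset.card_le_card_of_injOn (fun x => f x)
      · intro x hx
        rw [hS, Finset.mem_coe, Finset.mem_filter] at hx
        exact Finset.mem_filter.mpr ⟨Finset.mem_univ _, hp x, hx.2⟩
      · intro x _ y _ hxy
        exact hd x y (fun k => congrFun hxy k)
    -- S.card = a i c + a' where a' counts the other half; a' = a i c
    have hsplit : S.card =
        (S.filter (fun x => x i = false)).card +
        (S.filter (fun x => ¬ x i = false)).card :=
      (Finset.card_filter_add_card_filter_not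
        (p := fun x : Fin 4 → Bool => x i = false)).symm
    have h1 : (S.filter (fun x => x i = false)).card = (Finset.univ.filter
        (fun x : Fin 4 → Bool => x i = false ∧ f x i = c)).card := by
      rw [hS, Finset.filter_filter]
      congr 1
      ext x
      simp only [Finset.mem_filter]
      tauto
    have h2 : (S.filter (fun x => ¬ x i = false)).card = (Finset.univ.filter
        (fun x : Fin 4 → Bool => x i = false ∧ f x i = c)).card := by
      apply Finset.card_nbij (fun x => flipCoord x i)
      · intro x hx
        rw [hS, Finset.filter_filter, Finset.mem_coe, Finset.mem_filter] at hx
        obtain ⟨-, hfc, hxt⟩ := hx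
        refine Finset.mem_filter.mpr ⟨Finset.mem_univ _, ?_, ?_⟩
        · show flipCoord x i i = false
          rw [flipCoord_self]
          simp only [Bool.not_eq_false] at hxt
          rw [hxt]
          rfl
        · show f (flipCoord x i) i = c
          rw [← he x i]
          exact hfc
      · intro x _ y _ hxy
        have h2' : flipCoord (flipCoord x i) i = flipCoord (flipCoord y i) i :=
          congrArg (fun z => flipCoord z i) hxy
        rwa [flipCoord_flipCoord, flipCoord_flipCoord] at h2'
      · intro y hy
        rw [Finset.mem_coe, Finset.mem_filter] at hy
        obtain ⟨-, hyf, hyc⟩ := hy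
        refine ⟨flipCoord y i, ?_, flipCoord_flipCoord y i⟩
        rw [Finset.mem_coe, hS, Finset.filter_filter, Finset.mem_filter]
        refine ⟨Finset.mem_univ _, ?_, ?_⟩
        · rw [← he y i]
          exact hyc
        · rw [flipCoord_self, hyf]
          simp
    generalize (Finset.univ.filter
      (fun x : Fin 4 → Bool => x i = false ∧ f x i = c)).card = m at h1 h2 ⊢
    generalize (S.filter (fun x => x i = false)).card = m1 at h1 hsplit
    generalize (S.filter (fun x => ¬ x i = false)).card = m2 at h2 hsplit
    omega
  -- each `a i c ≤ 2`
  have hle2 : ∀ i c, a i c ≤ 2 := by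
    intro i c
    obtain ⟨k, hk⟩ := heven i c
    have := hle3 i c
    omega
  -- Step 3 : the fibers partition the half-cube, so the sum is 8
  have hsum : ∀ i : Fin 4, (∑ c : Fin 4, a i c) = 8 := by
    intro i
    have htot := Finset.card_eq_sum_card_fiberwise
      (s := Finset.univ.filter (fun x : Fin 4 → Bool => x i = false))
      (t := (Finset.univ : Finset (Fin 4)))
      (f := fun x => f x i)
      (fun x _ => Finset.mem_univ _)
    rw [hHcard i] at htot
    have hfib : ∀ c : Fin 4, a i c =
        ((Finset.univ.filter (fun x : Fin 4 → Bool => x i = false)).filter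
          (fun x => f x i = c)).card := by
      intro c
      simp only [ha]
      rw [Finset.filter_filter]
    exact (Finset.sum_congr rfl (fun c _ => hfib c)).trans htot.symm
  -- conclude
  intro i c
  suffices hfin : a i c = 2 by simpa only [ha] using hfin
  by_contra hne2
  have hlt : a i c < 2 := lt_of_le_of_ne (hle2 i c) hne2
  have hlt8 : (∑ d : Fin 4, a i d) < ∑ _d : Fin 4, 2 := by
    apply Finset.sum_lt_sum (fun d _ => hle2 i d)
    exact ⟨c, Finset.mem_univ c, hlt⟩
  have h8 : (∑ _d : Fin 4, 2) = 8 := by simp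
  rw [hsum i, h8] at hlt8
  exact absurd hlt8 (lt_irrefl 8)
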